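/- For 2 < α < 4 and any N₁ > 0, the equation N₁ = Λ·(α/(2(1 + Λ^{α/2})·log(1 + Λ^{−α/2})) − 1) has a unique solution Λ > 0. -/

import Mathlib

open Real

private lemma h_hasDeriv {t : ℝ} (ht : 0 < t) :
    HasDerivAt (fun t : ℝ => (1 + t) * Real.log (1 + t⁻¹)) (Real.log (1 + t⁻¹) - t⁻¹) t := by
  have h1 : HasDerivAt (fun t : ℝ => 1 + t) 1 t := (hasDerivAt_id t).const_add 1
  have h2 : HasDerivAt (fun t : ℝ => 1 + t⁻¹) (-(t^2)⁻¹) t := (hasDerivAt_inv ht.ne').const_add 1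
  have hpos : 0 < 1 + t⁻¹ := by positivity
  have h3 : HasDerivAt (fun t : ℝ => Real.log (1 + t⁻¹)) (-(t^2)⁻¹ / (1 + t⁻¹)) t :=
    h2.log hpos.ne'
  have := h1.mul h3
  refine HasDerivAt.congr_deriv this ?_
  have ht0 : t ≠ 0 := ht.ne'
  have h1' : 1 + t⁻¹ = (t + 1) / t := by field_simp
  rw [h1']
  field_simp
  ring

private lemma h_anti : StrictAntiOn (fun t : ℝ => (1 + t) * Real.log (1 + t⁻¹)) (Set.Ioi 0) := by
  apply strictAntiOn_of_deriv_neg (convex_Ioi 0)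
  · intro x hx
    exact (h_hasDeriv hx).continuousAt.continuousWithinAt
  · intro x hx
    rw [interior_Ioi] at hx
    have hx' : 0 < x := hx
    rw [(h_hasDeriv hx').deriv]
    have hpos : (0:ℝ) < 1 + x⁻¹ := by positivity
    have : Real.log (1 + x⁻¹) < (1 + x⁻¹) - 1 := by
      apply Real.log_lt_sub_one_of_pos hpos
      have : 0 < x⁻¹ := by positivity
      linarith
    simp at this ⊢
    linarith

private lemma equiv_eq (N₁ Λ α D : ℝ) (hΛ : 0 < Λ) (hD : 0 < D) :
    (N₁ = Λ * (α / D - 1)) ↔ (1 + N₁ / Λ) * D = α := by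
  rw [eq_comm, mul_sub, mul_one, sub_eq_iff_eq_add, mul_div_assoc',
    div_eq_iff hD.ne']
  constructor
  · intro h; field_simp; linarith
  · intro h; field_simp at h; linarith

theorem unique_Lambda2_star (α N₁ : ℝ) (hα : 2 < α) (hα4 : α < 4) (hN₁ : 0 < N₁) :
    ∃! Λ : ℝ, 0 < Λ ∧
      N₁ = Λ * (α / (2 * (1 + Λ ^ (α / 2)) * Real.log (1 + Λ ^ (-(α / 2)))) - 1) := by
  have ha1 : 1 < α / 2 := by linarith
  have ha0 : 0 < α / 2 := by linarith
  set F : ℝ → ℝ := fun Λ => (1 + N₁ / Λ) * (2 * (1 + Λ ^ (α/2)) * Real.log (1 + (Λ ^ (α/2))⁻¹))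
    with hFdef
  -- positivity of the log factor
  have hlogpos : ∀ t : ℝ, 0 < t → 0 < Real.log (1 + t⁻¹) := by
    intro t ht
    apply Real.log_pos
    have : 0 < t⁻¹ := by positivity
    linarith
  -- equivalence between the original equation and F Λ = α
  have equiv : ∀ Λ : ℝ, 0 < Λ →
      ((N₁ = Λ * (α / (2 * (1 + Λ ^ (α / 2)) * Real.log (1 + Λ ^ (-(α / 2)))) - 1)) ↔
        F Λ = α) := by
    intro Λ hΛ
    have ht0 : 0 < Λ ^ (α/2) := Real.rpow_pos_of_pos hΛ _
    have hD : 0 < 2 * (1 + Λ ^ (α/2)) * Real.log (1 + (Λ ^ (α/2))⁻¹) := by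
      have := hlogpos _ ht0
      have h1 : (0:ℝ) < 2 * (1 + Λ ^ (α/2)) := by positivity
      exact mul_pos h1 this
    rw [Real.rpow_neg hΛ.le]
    exact equiv_eq N₁ Λ α _ hΛ hD
  -- strict antitonicity of F on (0, ∞)
  have Fanti : StrictAntiOn F (Set.Ioi 0) := by
    intro x hx y hy hxy
    have hx0 : (0:ℝ) < x := hx
    have hy0 : (0:ℝ) < y := hy
    have htx : 0 < x ^ (α/2) := Real.rpow_pos_of_pos hx0 _
    have hty : 0 < y ^ (α/2) := Real.rpow_pos_of_pos hy0 _
    have hp : 1 + N₁ / y < 1 + N₁ / x := by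
      have := div_lt_div_of_pos_left hN₁ hx0 hxy
      linarith
    have hrpow : x ^ (α/2) < y ^ (α/2) := Real.rpow_lt_rpow hx0.le hxy ha0
    have hq' := h_anti (Set.mem_Ioi.mpr htx) (Set.mem_Ioi.mpr hty) hrpow
    simp only at hq'
    have hq : 2 * (1 + y ^ (α/2)) * Real.log (1 + (y ^ (α/2))⁻¹) <
        2 * (1 + x ^ (α/2)) * Real.log (1 + (x ^ (α/2))⁻¹) := by
      have h2 := hq'
      nlinarith [h2]
    have hppos : (0:ℝ) ≤ 1 + N₁ / y := by positivity
    have hqpos : (0:ℝ) ≤ 2 * (1 + y ^ (α/2)) * Real.log (1 + (y ^ (α/2))⁻¹) := by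
      have := hlogpos _ hty
      positivity
    simp only [hFdef]
    exact mul_lt_mul'' hp hq hppos hqpos
  -- choose Λ₀ (small) and Λ₁ (large)
  set ε : ℝ := min 1 ((α - 2) / 6) with hεdef
  have hε0 : 0 < ε := lt_min one_pos (by linarith)
  have hε1 : ε ≤ 1 := min_le_left _ _
  have hε2 : ε ≤ (α - 2) / 6 := min_le_right _ _
  set Λ₁ : ℝ := max 1 (max (N₁ / ε) (1 / ε)) with hΛ₁def
  have hΛ₁ge1 : 1 ≤ Λ₁ := le_max_left _ _
  have hΛ₁pos : 0 < Λ₁ := lt_of_lt_of_le one_pos hΛ₁ge1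
  set Λ₀ : ℝ := Real.exp (-(α/2)) with hΛ₀def
  have hΛ₀pos : 0 < Λ₀ := Real.exp_pos _
  have hΛ₀lt1 : Λ₀ < 1 := Real.exp_lt_one_iff.mpr (by linarith)
  have hΛ₀₁ : Λ₀ < Λ₁ := lt_of_lt_of_le hΛ₀lt1 hΛ₁ge1
  -- F Λ₁ < α
  have hFΛ₁ : F Λ₁ < α := by
    have hNε : N₁ / Λ₁ ≤ ε := by
      rw [div_le_iff₀ hΛ₁pos]
      have h1 : N₁ / ε ≤ Λ₁ := le_trans (le_max_left _ _) (le_max_right _ _)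
      rw [div_le_iff₀ hε0] at h1
      linarith [mul_comm ε Λ₁]
    have ht : 0 < Λ₁ ^ (α/2) := Real.rpow_pos_of_pos hΛ₁pos _
    have hΛ₁ε : 1 / ε ≤ Λ₁ := le_trans (le_max_right _ _) (le_max_right _ _)
    have htge : 1 / ε ≤ Λ₁ ^ (α/2) := by
      calc 1 / ε ≤ Λ₁ := hΛ₁ε
        _ = Λ₁ ^ (1:ℝ) := (Real.rpow_one _).symm
        _ ≤ Λ₁ ^ (α/2) := Real.rpow_le_rpow_of_exponent_le hΛ₁ge1 ha1.le
    have htinv : (Λ₁ ^ (α/2))⁻¹ ≤ ε := by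
      rw [inv_le_comm₀ ht hε0]
      rwa [one_div] at htge
    have hL : Real.log (1 + (Λ₁ ^ (α/2))⁻¹) < (Λ₁ ^ (α/2))⁻¹ := by
      have hpos : (0:ℝ) < 1 + (Λ₁ ^ (α/2))⁻¹ := by positivity
      have := Real.log_lt_sub_one_of_pos hpos (by
        have : 0 < (Λ₁ ^ (α/2))⁻¹ := by positivity
        linarith)
      linarith
    have hLpos : 0 < Real.log (1 + (Λ₁ ^ (α/2))⁻¹) := hlogpos _ ht
    have hq : 2 * (1 + Λ₁ ^ (α/2)) * Real.log (1 + (Λ₁ ^ (α/2))⁻¹) < 2 * (1 + ε) := by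
      have h1 : 2 * (1 + Λ₁ ^ (α/2)) * Real.log (1 + (Λ₁ ^ (α/2))⁻¹) <
          2 * (1 + Λ₁ ^ (α/2)) * (Λ₁ ^ (α/2))⁻¹ := by
        apply mul_lt_mul_of_pos_left hL
        positivity
      have h2 : 2 * (1 + Λ₁ ^ (α/2)) * (Λ₁ ^ (α/2))⁻¹ = 2 * ((Λ₁ ^ (α/2))⁻¹ + 1) := by
        field_simp
      rw [h2] at h1
      nlinarith
    have hp : 1 + N₁ / Λ₁ ≤ 1 + ε := by linarith
    have hqpos : 0 < 2 * (1 + Λ₁ ^ (α/2)) * Real.log (1 + (Λ₁ ^ (α/2))⁻¹) := by positivity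
    have : F Λ₁ < (1 + ε) * (2 * (1 + ε)) := by
      simp only [hFdef]
      exact mul_lt_mul' hp hq hqpos.le (by linarith)
    nlinarith [hε0.le, hε1, hε2]
  -- F Λ₀ > α
  have hFΛ₀ : α < F Λ₀ := by
    have ht : 0 < Λ₀ ^ (α/2) := Real.rpow_pos_of_pos hΛ₀pos _
    have ht1 : Λ₀ ^ (α/2) ≤ Λ₀ := by
      calc Λ₀ ^ (α/2) ≤ Λ₀ ^ (1:ℝ) :=
            Real.rpow_le_rpow_of_exponent_ge hΛ₀pos hΛ₀lt1.le ha1.le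
        _ = Λ₀ := Real.rpow_one _
    have htinv : Real.exp (α/2) ≤ (Λ₀ ^ (α/2))⁻¹ := by
      have h1 : Λ₀ ^ (α/2) ≤ Real.exp (-(α/2)) := ht1
      calc Real.exp (α/2) = (Real.exp (-(α/2)))⁻¹ := by rw [← Real.exp_neg, neg_neg]
        _ ≤ (Λ₀ ^ (α/2))⁻¹ := by
            apply inv_anti₀ ht h1
    have hL : α/2 ≤ Real.log (1 + (Λ₀ ^ (α/2))⁻¹) := by
      calc α/2 = Real.log (Real.exp (α/2)) := (Real.log_exp _).symm
        _ ≤ Real.log (1 + (Λ₀ ^ (α/2))⁻¹) := by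
            apply Real.log_le_log (Real.exp_pos _)
            linarith
    have hq : α ≤ 2 * (1 + Λ₀ ^ (α/2)) * Real.log (1 + (Λ₀ ^ (α/2))⁻¹) := by
      nlinarith [hL, ht, ha0]
    have hp : 1 < 1 + N₁ / Λ₀ := by
      have : 0 < N₁ / Λ₀ := by positivity
      linarith
    have hqpos : 0 < 2 * (1 + Λ₀ ^ (α/2)) * Real.log (1 + (Λ₀ ^ (α/2))⁻¹) := by
      linarith
    calc α ≤ 2 * (1 + Λ₀ ^ (α/2)) * Real.log (1 + (Λ₀ ^ (α/2))⁻¹) := hq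
      _ = 1 * (2 * (1 + Λ₀ ^ (α/2)) * Real.log (1 + (Λ₀ ^ (α/2))⁻¹)) := (one_mul _).symm
      _ < F Λ₀ := by
          simp only [hFdef]
          exact mul_lt_mul_of_pos_right hp hqpos
  -- continuity of F on [Λ₀, Λ₁]
  have hcont : ContinuousOn F (Set.Icc Λ₀ Λ₁) := by
    intro x hx
    have hx0 : 0 < x := lt_of_lt_of_le hΛ₀pos hx.1
    have hrp : ContinuousAt (fun x : ℝ => x ^ (α/2)) x :=
      Real.continuousAt_rpow_const x (α/2) (Or.inl hx0.ne')
    have htx : 0 < x ^ (α/2) := Real.rpow_pos_of_pos hx0 _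
    apply ContinuousAt.continuousWithinAt
    apply ContinuousAt.mul
    · exact continuousAt_const.add (continuousAt_const.div continuousAt_id hx0.ne')
    · apply ContinuousAt.mul
      · exact continuousAt_const.mul (continuousAt_const.add hrp)
      · apply ContinuousAt.log
        · exact continuousAt_const.add (hrp.inv₀ htx.ne')
        · have : 0 < (x ^ (α/2))⁻¹ := by positivity
          linarith
  -- existence via IVT
  have hmem : α ∈ Set.Icc (F Λ₁) (F Λ₀) := ⟨hFΛ₁.le, hFΛ₀.le⟩
  obtain ⟨Λ, hΛmem, hFΛ⟩ := intermediate_value_Icc' hΛ₀₁.le hcont hmem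
  have hΛpos : 0 < Λ := lt_of_lt_of_le hΛ₀pos hΛmem.1
  refine ⟨Λ, ⟨hΛpos, (equiv Λ hΛpos).mpr hFΛ⟩, ?_⟩
  rintro y ⟨hy, hye⟩
  have hFy : F y = α := (equiv y hy).mp hye
  exact Fanti.injOn (Set.mem_Ioi.mpr hy) (Set.mem_Ioi.mpr hΛpos) (by rw [hFy, hFΛ])
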